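/- Let A be an ℓ×n integer matrix and let Δ ≥ 1 be an upper bound on the absolute values of all subdeterminants of A. Then there exist finitely many integer vectors y₁, …, y_s ∈ ℤ^n, each with every component of absolute value at most Δ, such that the cone {x ∈ ℝ^n : A x ≤ 0} equals the set of all nonnegative real linear combinations of y₁, …, y_s; that is, for every x ∈ ℝ^n, A x ≤ 0 holds if and only if there exist reals λ₁, …, λ_s ≥ 0 with x = λ₁ y₁ + ⋯ + λ_s y_s. -/

import Mathlib

/-- All absolute values of subdeterminants of `A` are bounded by `Δ`. -/
def SubdetBound {ℓ n : ℕ} (A : Matrix (Fin ℓ) (Fin n) ℤ) (Δ : ℤ) : Prop :=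
  ∀ (k : ℕ) (f : Fin k → Fin ℓ) (g : Fin k → Fin n),
    Function.Injective f → Function.Injective g →
      |(A.submatrix f g).det| ≤ Δ

namespace ConeGen

open Matrix Module Submodule

variable {ℓ n : ℕ}

/-- Rows of the combined system: rows of `A` (≤ 0) and box rows `± x_j ≤ 1`. -/
def brow (A : Matrix (Fin ℓ) (Fin n) ℤ) : Fin ℓ ⊕ (Fin n × Bool) → Fin n → ℤ
  | Sum.inl i => A i
  | Sum.inr js => fun q => if q = js.1 then (if js.2 then 1 else -1) else 0

def crhs : Fin ℓ ⊕ (Fin n × Bool) → ℤ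
  | Sum.inl _ => 0
  | Sum.inr _ => 1

noncomputable def bR (A : Matrix (Fin ℓ) (Fin n) ℤ) (i : Fin ℓ ⊕ (Fin n × Bool)) :
    Fin n → ℝ := fun q => ((brow A i q : ℤ) : ℝ)

noncomputable def cR (i : Fin ℓ ⊕ (Fin n × Bool)) : ℝ := ((crhs i : ℤ) : ℝ)

/-- The truncated polytope. -/
def Pset (A : Matrix (Fin ℓ) (Fin n) ℤ) : Set (Fin n → ℝ) :=
  {u | ∀ i, bR A i ⬝ᵥ u ≤ cR i}

lemma bR_inl (A : Matrix (Fin ℓ) (Fin n) ℤ) (i : Fin ℓ) (x : Fin n → ℝ) :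
    bR A (Sum.inl i) ⬝ᵥ x = ∑ q, (A i q : ℝ) * x q := by
  simp [bR, brow, dotProduct]

lemma bR_inr (A : Matrix (Fin ℓ) (Fin n) ℤ) (j : Fin n) (s : Bool) (x : Fin n → ℝ) :
    bR A (Sum.inr (j, s)) ⬝ᵥ x = if s then x j else - x j := by
  cases s <;>
    simp [bR, brow, dotProduct, ite_mul, Finset.sum_ite_eq' Finset.univ j]

lemma dot_add_smul (b u w : Fin n → ℝ) (t : ℝ) :
    b ⬝ᵥ (fun q => u q + t * w q) = b ⬝ᵥ u + t * (b ⬝ᵥ w) := by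
  simp only [dotProduct, mul_add, Finset.sum_add_distrib, Finset.mul_sum]
  congr 1
  apply Finset.sum_congr rfl
  intros; ring

/-- The determinant bound: any square matrix built from combined rows and a
column selection has determinant bounded by `Δ`. -/
lemma det_bound (A : Matrix (Fin ℓ) (Fin n) ℤ) (Δ : ℤ) (hΔ : 1 ≤ Δ)
    (hsub : SubdetBound A Δ) :
    ∀ (m : ℕ) (σ : Fin m → Fin ℓ ⊕ (Fin n × Bool)) (g : Fin m → Fin n),
      Function.Injective σ → Function.Injective g →
      |(Matrix.of fun p q => brow A (σ p) (g q)).det| ≤ Δ := by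
  intro m
  induction m with
  | zero =>
    intro σ g _ _
    simp only [Matrix.det_fin_zero, abs_one]
    exact hΔ
  | succ m ih =>
    intro σ g hσ hg
    by_cases hall : ∀ p, ∃ i, σ p = Sum.inl i
    · choose f hf using hall
      have hfinj : Function.Injective f := by
        intro a b hab
        apply hσ
        rw [hf a, hf b, hab]
      have : (Matrix.of fun p q => brow A (σ p) (g q)) = A.submatrix f g := by
        ext p q
        rw [Matrix.of_apply, hf p]
        rfl
      rw [this]
      exact hsub _ f g hfinj hg
    · push_neg at hall
      obtain ⟨p, hp⟩ := hall
      set W : Matrix (Fin (m+1)) (Fin (m+1)) ℤ :=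
        Matrix.of fun p q => brow A (σ p) (g q) with hW
      obtain ⟨js, hjs⟩ : ∃ js, σ p = Sum.inr js := by
        cases hσp : σ p with
        | inl i => exact absurd hσp (hp i)
        | inr js => exact ⟨js, rfl⟩
      obtain ⟨j, s⟩ := js
      have hWrow : ∀ q, W p q = if g q = j then (if s then 1 else -1) else 0 := by
        intro q
        simp only [hW, Matrix.of_apply, hjs]
        rfl
      by_cases hq0 : ∃ q0, g q0 = j
      · obtain ⟨q0, hq0⟩ := hq0
        have hcollapse : W.det =
            (-1) ^ (p + q0 : ℕ) * W p q0 *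
              (W.submatrix p.succAbove q0.succAbove).det := by
          rw [Matrix.det_succ_row W p]
          apply Finset.sum_eq_single q0
          · intro q _ hq
            have : W p q = 0 := by
              rw [hWrow q, if_neg]
              intro h
              exact hq (hg (h.trans hq0.symm))
            rw [this]; ring
          · intro h; exact absurd (Finset.mem_univ q0) h
        have habs : |W p q0| = 1 := by
          rw [hWrow q0, if_pos hq0]
          cases s <;> simp
        have hminor : |(W.submatrix p.succAbove q0.succAbove).det| ≤ Δ := by
          have := ih (σ ∘ p.succAbove) (g ∘ q0.succAbove)
            (hσ.comp Fin.succAbove_right_injective)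
            (hg.comp Fin.succAbove_right_injective)
          exact this
        calc |W.det| = |(-1) ^ (p + q0 : ℕ)| * |W p q0| *
            |(W.submatrix p.succAbove q0.succAbove).det| := by
              rw [hcollapse, abs_mul, abs_mul]
        _ = |(W.submatrix p.succAbove q0.succAbove).det| := by
              rw [habs, abs_pow, abs_neg, abs_one, one_pow, one_mul, one_mul]
        _ ≤ Δ := hminor
      · push_neg at hq0
        have : W.det = 0 := by
          apply Matrix.det_eq_zero_of_row_eq_zero p
          intro q
          rw [hWrow q, if_neg (hq0 q)]
        rw [this, abs_zero]
        exact le_trans zero_le_one hΔ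

/-- The generating set: integer points in the box with `A z ≤ 0`. -/
noncomputable def gens (A : Matrix (Fin ℓ) (Fin n) ℤ) (Δ : ℤ) : Finset (Fin n → ℤ) :=
  (Fintype.piFinset fun _ : Fin n => Finset.Icc (-Δ) Δ).filter
    (fun z => ∀ i, A.mulVec z i ≤ 0)

/-- `x` is a nonnegative combination of generators. -/
def GRep (A : Matrix (Fin ℓ) (Fin n) ℤ) (Δ : ℤ) (x : Fin n → ℝ) : Prop :=
  ∃ (m : ℕ) (θ : Fin m → ℝ) (z : Fin m → Fin n → ℤ),
    (∀ i, 0 ≤ θ i) ∧ (∀ i, z i ∈ gens A Δ) ∧ ∀ j, x j = ∑ i, θ i * (z i j : ℝ)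

lemma GRep.combine {A : Matrix (Fin ℓ) (Fin n) ℤ} {Δ : ℤ} {u w x : Fin n → ℝ}
    {a b : ℝ} (ha : 0 ≤ a) (hb : 0 ≤ b) (hu : GRep A Δ u) (hw : GRep A Δ w)
    (hx : ∀ j, x j = a * u j + b * w j) : GRep A Δ x := by
  obtain ⟨m₁, θ₁, z₁, hθ₁, hz₁, hs₁⟩ := hu
  obtain ⟨m₂, θ₂, z₂, hθ₂, hz₂, hs₂⟩ := hw
  refine ⟨m₁ + m₂, Fin.append (fun i => a * θ₁ i) (fun i => b * θ₂ i),
    Fin.append z₁ z₂, ?_, ?_, ?_⟩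
  · intro i
    refine Fin.addCases (fun i => ?_) (fun i => ?_) i
    · rw [Fin.append_left]; exact mul_nonneg ha (hθ₁ i)
    · rw [Fin.append_right]; exact mul_nonneg hb (hθ₂ i)
  · intro i
    refine Fin.addCases (fun i => ?_) (fun i => ?_) i
    · rw [Fin.append_left]; exact hz₁ i
    · rw [Fin.append_right]; exact hz₂ i
  · intro j
    rw [hx j, hs₁ j, hs₂ j, Fin.sum_univ_add]
    rw [Finset.mul_sum, Finset.mul_sum]
    congr 1
    · apply Finset.sum_congr rfl
      intro i _
      rw [Fin.append_left, Fin.append_left]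
      ring
    · apply Finset.sum_congr rfl
      intro i _
      rw [Fin.append_right, Fin.append_right]
      ring

lemma GRep.zero {A : Matrix (Fin ℓ) (Fin n) ℤ} {Δ : ℤ} :
    GRep A Δ (fun _ => (0 : ℝ)) :=
  ⟨0, Fin.elim0, Fin.elim0, fun i => i.elim0, fun i => i.elim0, fun j => by simp⟩

lemma GRep.scale {A : Matrix (Fin ℓ) (Fin n) ℤ} {Δ : ℤ} {u x : Fin n → ℝ}
    {c : ℝ} (hc : 0 ≤ c) (hu : GRep A Δ u) (hx : ∀ j, x j = c * u j) :
    GRep A Δ x :=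
  GRep.combine hc le_rfl hu GRep.zero (fun j => by rw [hx j]; ring)

/-- A basic point of the truncated polytope is a nonnegative multiple of a generator. -/
lemma grep_of_basic {A : Matrix (Fin ℓ) (Fin n) ℤ} {Δ : ℤ} (hΔ : 1 ≤ Δ)
    (hsub : SubdetBound A Δ) (u : Fin n → ℝ) (hu : u ∈ Pset A)
    (σ : Fin n → Fin ℓ ⊕ (Fin n × Bool)) (hσinj : Function.Injective σ)
    (htight : ∀ p, bR A (σ p) ⬝ᵥ u = cR (σ p))
    (hdet : (Matrix.of fun p q => brow A (σ p) q).det ≠ 0) :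
    GRep A Δ u := by
  classical
  set Wz : Matrix (Fin n) (Fin n) ℤ := Matrix.of fun p q => brow A (σ p) q with hWz
  set WR : Matrix (Fin n) (Fin n) ℝ := Wz.map (fun a => (a : ℝ)) with hWR
  set cz : Fin n → ℤ := fun p => crhs (σ p) with hcz
  -- tightness over ℝ
  have h1 : WR.mulVec u = fun p => ((cz p : ℤ) : ℝ) := by
    funext p
    have := htight p
    simpa [hWR, hWz, Matrix.mulVec, dotProduct, bR, cR, Matrix.map_apply] using this
  set d : ℤ := Wz.det with hd
  have hWRmap : WR = (Int.castRingHom ℝ).mapMatrix Wz := rfl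
  have hdR : ((d : ℤ) : ℝ) = WR.det := by
    rw [hWRmap, hd, ← RingHom.map_det]
    rfl
  have hdR0 : ((d : ℤ) : ℝ) ≠ 0 := by
    rw [hdR]
    -- WR.det ≠ 0 from hdet
    intro h
    apply hdet
    have h2 : ((d : ℤ) : ℝ) = 0 := by rw [hdR]; exact h
    have h3 : d = 0 := by exact_mod_cast h2
    exact h3
  -- adjugate identity over ℝ
  have hadj : WR.adjugate.mulVec (fun p => ((cz p : ℤ) : ℝ)) =
      fun q => ((d : ℤ) : ℝ) * u q := by
    rw [← h1, Matrix.mulVec_mulVec, Matrix.adjugate_mul, ← hdR,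
      Matrix.smul_mulVec, Matrix.one_mulVec]
    rfl
  set z0 : Fin n → ℤ := Wz.adjugate.mulVec cz with hz0def
  have hz0 : ∀ q, ((z0 q : ℤ) : ℝ) = ((d : ℤ) : ℝ) * u q := by
    intro q
    have hcast : ((z0 q : ℤ) : ℝ) =
        (WR.adjugate.mulVec (fun p => ((cz p : ℤ) : ℝ))) q := by
      rw [hWRmap, ← RingHom.map_adjugate]
      simp only [hz0def, Matrix.mulVec, dotProduct, RingHom.mapMatrix_apply,
        Matrix.map_apply, Int.coe_castRingHom]
      push_cast
      rfl
    rw [hcast, hadj]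
  set ε : ℤ := if 0 < d then 1 else -1 with hε
  have hεd : ε * d = |d| := by
    rcases lt_or_gt_of_ne hdet with hneg | hpos
    · rw [hε, if_neg (by omega), abs_of_neg hneg]; ring
    · rw [hε, if_pos hpos, abs_of_pos hpos]; ring
  set D : ℤ := |d| with hD
  have hDpos : 0 < D := abs_pos.2 hdet
  set z : Fin n → ℤ := fun q => ε * z0 q with hzdef
  have hzcast : ∀ q, ((z q : ℤ) : ℝ) = ((D : ℤ) : ℝ) * u q := by
    intro q
    rw [hzdef]
    push_cast
    rw [hz0 q, ← mul_assoc]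
    rw [show ((ε : ℤ) : ℝ) * ((d : ℤ) : ℝ) = ((D : ℤ) : ℝ) by
      rw [← Int.cast_mul, hεd, hD]]
  have hDΔ : D ≤ Δ := by
    have := det_bound A Δ hΔ hsub n σ id hσinj (fun a b h => h)
    rw [hD, hd]
    exact this
  have hubox : ∀ q, |u q| ≤ 1 := by
    intro q
    rw [abs_le]
    constructor
    · have h := hu (Sum.inr (q, false))
      rw [bR_inr] at h
      simp only [cR, crhs, Bool.false_eq_true, if_false, Int.cast_one] at h
      linarith
    · have h := hu (Sum.inr (q, true))
      rw [bR_inr] at h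
      simpa [cR, crhs] using h
  have hzbound : ∀ q, |z q| ≤ Δ := by
    intro q
    have hcast : |((z q : ℤ) : ℝ)| ≤ ((Δ : ℤ) : ℝ) := by
      rw [hzcast q, abs_mul, abs_of_nonneg (show (0:ℝ) ≤ ((D : ℤ) : ℝ) by
        exact_mod_cast hDpos.le)]
      calc ((D : ℤ) : ℝ) * |u q| ≤ ((D : ℤ) : ℝ) * 1 :=
            mul_le_mul_of_nonneg_left (hubox q) (by exact_mod_cast hDpos.le)
      _ = ((D : ℤ) : ℝ) := mul_one _
      _ ≤ ((Δ : ℤ) : ℝ) := by exact_mod_cast hDΔ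
    rw [← Int.cast_abs] at hcast
    exact_mod_cast hcast
  have hAz : ∀ i, A.mulVec z i ≤ 0 := by
    intro i
    have hcastv : ((A.mulVec z i : ℤ) : ℝ) =
        ((D : ℤ) : ℝ) * (bR A (Sum.inl i) ⬝ᵥ u) := by
      simp only [Matrix.mulVec, dotProduct, bR, brow]
      push_cast
      rw [Finset.mul_sum]
      apply Finset.sum_congr rfl
      intro q _
      rw [hzcast q]
      ring
    have hle := hu (Sum.inl i)
    simp only [cR, crhs, Int.cast_zero] at hle
    have h0 : ((A.mulVec z i : ℤ) : ℝ) ≤ 0 := by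
      rw [hcastv]
      exact mul_nonpos_of_nonneg_of_nonpos (by exact_mod_cast hDpos.le) hle
    exact_mod_cast h0
  have hzmem : z ∈ gens A Δ := by
    rw [gens, Finset.mem_filter]
    refine ⟨Fintype.mem_piFinset.2 fun q => Finset.mem_Icc.2 ?_, hAz⟩
    have := abs_le.1 (hzbound q)
    exact this
  refine ⟨1, fun _ => (((D : ℤ) : ℝ))⁻¹, fun _ => z, ?_, fun _ => hzmem, ?_⟩
  · intro _
    exact inv_nonneg.2 (by exact_mod_cast hDpos.le)
  · intro j
    rw [Fin.sum_univ_one, hzcast j, ← mul_assoc,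
      inv_mul_cancel₀ (show ((D : ℤ) : ℝ) ≠ 0 by exact_mod_cast hDpos.ne'),
      one_mul]

/-- Every point of the truncated polytope is a nonnegative combination of generators. -/
lemma grep_of_mem_P {A : Matrix (Fin ℓ) (Fin n) ℤ} {Δ : ℤ} (hΔ : 1 ≤ Δ)
    (hsub : SubdetBound A Δ) :
    ∀ (k : ℕ) (u : Fin n → ℝ), u ∈ Pset A →
      n - finrank ℝ (span ℝ (bR A '' {i | bR A i ⬝ᵥ u = cR i})) = k →
      GRep A Δ u := by
  intro k
  induction k using Nat.strong_induction_on with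
  | _ k IH =>
  intro u hu hk
  classical
  set S : Set (Fin n → ℝ) := bR A '' {i | bR A i ⬝ᵥ u = cR i} with hS
  set p : Submodule ℝ (Fin n → ℝ) := span ℝ S with hp
  have hfinn : finrank ℝ (Fin n → ℝ) = n := by
    rw [Module.finrank_fintype_fun_eq_card, Fintype.card_fin]
  have hple : finrank ℝ p ≤ n := le_trans p.finrank_le (le_of_eq hfinn)
  by_cases hfull : finrank ℝ p = n
  · -- basic point: extract n linearly independent tight rows
    have hptop : p = ⊤ := Submodule.eq_top_of_finrank_eq (by rw [hfull, hfinn])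
    obtain ⟨t, hts, hspan, hli⟩ := exists_linearIndependent ℝ S
    have hspan_top : span ℝ t = ⊤ := by rw [hspan, ← hp, hptop]
    haveI : Fintype t := hli.setFinite.fintype
    have hcard : Fintype.card t = n := by
      let B : Basis t ℝ (Fin n → ℝ) :=
        Basis.mk hli (by rw [Subtype.range_coe, hspan_top])
      have := Module.finrank_eq_card_basis B
      rw [hfinn] at this
      exact this.symm
    let e : Fin n ≃ t := (Fintype.equivFinOfCardEq hcard).symm
    have hmem : ∀ q : Fin n, ((e q : Fin n → ℝ)) ∈ S := fun q => hts (e q).2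
    have hmem' : ∀ q : Fin n, ∃ i, (bR A i ⬝ᵥ u = cR i) ∧ bR A i = (e q : Fin n → ℝ) := by
      intro q
      obtain ⟨i, hi1, hi2⟩ := (Set.mem_image _ _ _).1 (hmem q)
      exact ⟨i, hi1, hi2⟩
    choose σ hσtight hσeq using hmem'
    have hσinj : Function.Injective σ := by
      intro a b hab
      have heq : bR A (σ a) = bR A (σ b) := by rw [hab]
      rw [hσeq a, hσeq b] at heq
      exact e.injective (Subtype.coe_injective heq)
    have hrows : (fun q => bR A (σ q)) = (fun x : t => (x : Fin n → ℝ)) ∘ e := by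
      funext q
      rw [hσeq q]
      rfl
    have hliRows : LinearIndependent ℝ (fun q => bR A (σ q)) := by
      rw [hrows]
      exact hli.comp e e.injective
    set WR : Matrix (Fin n) (Fin n) ℝ := Matrix.of fun q q' => bR A (σ q) q' with hWR
    have hunit : IsUnit WR := by
      rw [← Matrix.linearIndependent_rows_iff_isUnit]
      exact hliRows
    have hdetR : WR.det ≠ 0 := by
      have := (Matrix.isUnit_iff_isUnit_det WR).1 hunit
      exact this.ne_zero
    have hdetZ : (Matrix.of fun q q' => brow A (σ q) q').det ≠ 0 := by
      intro h0
      apply hdetR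
      have : WR = ((Int.castRingHom ℝ).mapMatrix (Matrix.of fun q q' => brow A (σ q) q')) := by
        ext q q'
        rfl
      rw [this, ← RingHom.map_det, h0]
      simp
    exact grep_of_basic hΔ hsub u hu σ hσinj (fun q => hσtight q) hdetZ
  · -- non-basic: move along a direction orthogonal to all tight rows
    have hlt : finrank ℝ p < n := lt_of_le_of_ne hple hfull
    have hne : p ≠ ⊤ := by
      intro h
      apply hfull
      rw [h, finrank_top, hfinn]
    obtain ⟨f, hf0, hfmap⟩ :=
      Submodule.exists_dual_map_eq_bot_of_lt_top (lt_top_iff_ne_top.2 hne) inferInstance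
    set v : Fin n → ℝ := fun j => f (Pi.single j 1) with hv
    have hfx : ∀ x : Fin n → ℝ, f x = x ⬝ᵥ v := by
      intro x
      have h1 : f x = ∑ j, f (Pi.single j (x j)) := by
        conv_lhs => rw [← Finset.univ_sum_single x]
        rw [map_sum]
      rw [h1]
      simp only [dotProduct]
      apply Finset.sum_congr rfl
      intro j _
      have h2 : (Pi.single j (x j) : Fin n → ℝ) =
          x j • (Pi.single j (1:ℝ) : Fin n → ℝ) := by
        funext q
        by_cases h : q = j <;> simp [Pi.single_apply, h]
      rw [h2, f.map_smul, smul_eq_mul]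
    have hv0 : ∃ j, v j ≠ 0 := by
      by_contra h
      push_neg at h
      apply hf0
      apply LinearMap.ext
      intro x
      rw [hfx x]
      simp [dotProduct, h]
    have hporth : ∀ x ∈ p, f x = 0 := by
      intro x hx
      have : f x ∈ p.map f := Submodule.mem_map_of_mem hx
      rw [hfmap] at this
      exact this
    have horth : ∀ i, (bR A i ⬝ᵥ u = cR i) → bR A i ⬝ᵥ v = 0 := by
      intro i hi
      rw [← hfx]
      exact hporth _ (subset_span ⟨i, hi, rfl⟩)
    -- moving along w
    have key : ∀ w : Fin n → ℝ, (∃ j, w j ≠ 0) →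
        (∀ i, (bR A i ⬝ᵥ u = cR i) → bR A i ⬝ᵥ w = 0) →
        ∃ t : ℝ, 0 < t ∧ GRep A Δ (fun q => u q + t * w q) := by
      intro w hw hworth
      set Iplus : Finset (Fin ℓ ⊕ (Fin n × Bool)) :=
        Finset.univ.filter (fun i => 0 < bR A i ⬝ᵥ w) with hIplus
      have hInonempty : Iplus.Nonempty := by
        obtain ⟨j, hj⟩ := hw
        rcases hj.lt_or_gt with hneg | hpos
        · refine ⟨Sum.inr (j, false), ?_⟩
          rw [hIplus, Finset.mem_filter]
          refine ⟨Finset.mem_univ _, ?_⟩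
          rw [bR_inr]
          simpa using hneg
        · refine ⟨Sum.inr (j, true), ?_⟩
          rw [hIplus, Finset.mem_filter]
          refine ⟨Finset.mem_univ _, ?_⟩
          rw [bR_inr]
          simpa using hpos
      obtain ⟨i0, hi0mem, hi0min⟩ := Iplus.exists_min_image
        (fun i => (cR i - bR A i ⬝ᵥ u) / (bR A i ⬝ᵥ w)) hInonempty
      have hi0pos : 0 < bR A i0 ⬝ᵥ w := (Finset.mem_filter.1 hi0mem).2
      have hi0strict : bR A i0 ⬝ᵥ u < cR i0 := by
        rcases lt_or_eq_of_le (hu i0) with h | h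
        · exact h
        · exact absurd (hworth i0 h) hi0pos.ne'
      set tm : ℝ := (cR i0 - bR A i0 ⬝ᵥ u) / (bR A i0 ⬝ᵥ w) with htm
      have htpos : 0 < tm := div_pos (sub_pos.2 hi0strict) hi0pos
      set u' : Fin n → ℝ := fun q => u q + tm * w q with hu'
      have hdotu' : ∀ i, bR A i ⬝ᵥ u' = bR A i ⬝ᵥ u + tm * (bR A i ⬝ᵥ w) := by
        intro i
        rw [hu']
        exact dot_add_smul _ _ _ _
      have hu'P : u' ∈ Pset A := by
        intro i
        rw [hdotu' i]
        rcases le_or_gt (bR A i ⬝ᵥ w) 0 with hle | hpos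
        · have : tm * (bR A i ⬝ᵥ w) ≤ 0 := mul_nonpos_of_nonneg_of_nonpos htpos.le hle
          linarith [hu i]
        · have himem : i ∈ Iplus := by
            rw [hIplus, Finset.mem_filter]
            exact ⟨Finset.mem_univ _, hpos⟩
          have hle2 : (cR i0 - bR A i0 ⬝ᵥ u) / (bR A i0 ⬝ᵥ w) ≤
              (cR i - bR A i ⬝ᵥ u) / (bR A i ⬝ᵥ w) := by
            simpa using hi0min i himem
          have h2 : tm * (bR A i ⬝ᵥ w) ≤ cR i - bR A i ⬝ᵥ u := by
            rw [htm, ← le_div_iff₀ hpos]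
            exact hle2
          linarith
      -- tight rows at u'
      have htight_old : ∀ i, (bR A i ⬝ᵥ u = cR i) → bR A i ⬝ᵥ u' = cR i := by
        intro i hi
        rw [hdotu' i, hworth i hi, mul_zero, add_zero, hi]
      have htight_new : bR A i0 ⬝ᵥ u' = cR i0 := by
        rw [hdotu' i0, htm, div_mul_cancel₀ _ hi0pos.ne']
        ring
      -- finrank increases
      set S' : Set (Fin n → ℝ) := bR A '' {i | bR A i ⬝ᵥ u' = cR i} with hS'
      set p' : Submodule ℝ (Fin n → ℝ) := span ℝ S' with hp'
      have hpp' : p ≤ p' := by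
        apply span_mono
        rw [hS, hS']
        apply Set.image_mono
        intro i hi
        exact htight_old i hi
      have hi0p' : bR A i0 ∈ p' := subset_span ⟨i0, htight_new, rfl⟩
      have hi0notp : bR A i0 ∉ p := by
        intro hmem
        have hdotw0 : ∀ x ∈ p, x ⬝ᵥ w = 0 := by
          intro x hx
          induction hx using Submodule.span_induction with
          | mem x hx =>
            obtain ⟨i, hi, rfl⟩ := hx
            exact hworth i hi
          | zero => simp
          | add x y _ _ hx hy => rw [add_dotProduct, hx, hy, add_zero]
          | smul c x _ hx => rw [smul_dotProduct, hx, smul_zero]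
        exact hi0pos.ne' (hdotw0 _ hmem)
      have hplt : p < p' := lt_of_le_of_ne hpp' (fun h => hi0notp (h ▸ hi0p'))
      have hfr : finrank ℝ p < finrank ℝ p' := Submodule.finrank_lt_finrank_of_lt hplt
      have hfr' : finrank ℝ p' ≤ n := le_trans p'.finrank_le (le_of_eq hfinn)
      have hklt : n - finrank ℝ p' < k := by omega
      exact ⟨tm, htpos, IH _ hklt u' hu'P rfl⟩
    obtain ⟨t₁, ht₁, hg₁⟩ := key v hv0 horth
    obtain ⟨t₂, ht₂, hg₂⟩ := key (fun q => - v q) (by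
        obtain ⟨j, hj⟩ := hv0
        exact ⟨j, by simpa using hj⟩)
      (by
        intro i hi
        have h := horth i hi
        have : bR A i ⬝ᵥ (fun q => - v q) = - (bR A i ⬝ᵥ v) := by
          simp [dotProduct, Finset.sum_neg_distrib]
        rw [this, h, neg_zero])
    refine GRep.combine (a := t₂ / (t₁ + t₂)) (b := t₁ / (t₁ + t₂))
      (by positivity) (by positivity) hg₁ hg₂ ?_
    intro j
    field_simp
    ring

end ConeGen

theorem cone_generators {ℓ n : ℕ}
    (A : Matrix (Fin ℓ) (Fin n) ℤ) (Δ : ℤ)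
    (hΔ : 1 ≤ Δ) (hsub : SubdetBound A Δ) :
    ∃ (s : ℕ) (y : Fin s → Fin n → ℤ),
      (∀ i j, |y i j| ≤ Δ) ∧
      ∀ x : Fin n → ℝ,
        (A.map (fun a => (a : ℝ))).mulVec x ≤ 0 ↔
          ∃ lam : Fin s → ℝ, (∀ i, 0 ≤ lam i) ∧
            ∀ j, x j = ∑ i, lam i * (y i j : ℝ) := by
  classical
  refine ⟨(ConeGen.gens A Δ).card, fun i => ((ConeGen.gens A Δ).equivFin.symm i).1, ?_, ?_⟩
  · intro i j
    have hmem := ((ConeGen.gens A Δ).equivFin.symm i).2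
    simp only [ConeGen.gens, Finset.mem_filter] at hmem
    have hbox := Fintype.mem_piFinset.1 hmem.1 j
    exact abs_le.2 (Finset.mem_Icc.1 hbox)
  · intro x
    constructor
    · -- hard direction
      intro hx
      have hxr : ∀ r, ∑ q, (A r q : ℝ) * x q ≤ 0 := by
        intro r
        have h := hx r
        simpa [Matrix.mulVec, dotProduct, Matrix.map_apply] using h
      have hGR : ConeGen.GRep A Δ x := by
        by_cases hM : ∀ j, x j = 0
        · exact ⟨0, Fin.elim0, Fin.elim0, fun i => i.elim0, fun i => i.elim0,
            fun j => by rw [hM j]; simp⟩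
        · push_neg at hM
          obtain ⟨j0, hj0⟩ := hM
          set M : ℝ := ∑ j, |x j| with hMdef
          have hMpos : 0 < M := by
            calc (0:ℝ) < |x j0| := abs_pos.2 hj0
            _ ≤ M := Finset.single_le_sum (fun j _ => abs_nonneg (x j))
                (Finset.mem_univ j0)
          set u : Fin n → ℝ := fun q => M⁻¹ * x q with hudef
          have hbound : ∀ j, |u j| ≤ 1 := by
            intro j
            rw [hudef]
            have hxj : |x j| ≤ M :=
              Finset.single_le_sum (fun j' _ => abs_nonneg (x j')) (Finset.mem_univ j)
            rw [abs_mul, abs_of_nonneg (inv_nonneg.2 hMpos.le)]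
            rw [inv_mul_le_iff₀ hMpos, mul_one]
            exact hxj
          have huP : u ∈ ConeGen.Pset A := by
            intro i
            cases i with
            | inl r =>
              rw [ConeGen.bR_inl]
              have : ∑ q, (A r q : ℝ) * (M⁻¹ * x q) =
                  M⁻¹ * ∑ q, (A r q : ℝ) * x q := by
                rw [Finset.mul_sum]
                apply Finset.sum_congr rfl
                intros; ring
              rw [hudef]
              simp only []
              rw [this]
              have h0 : M⁻¹ * (∑ q, (A r q : ℝ) * x q) ≤ 0 :=
                mul_nonpos_of_nonneg_of_nonpos (inv_nonneg.2 hMpos.le) (hxr r)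
              simpa [ConeGen.cR, ConeGen.crhs] using h0
            | inr js =>
              obtain ⟨j, s⟩ := js
              rw [ConeGen.bR_inr]
              have h1 := abs_le.1 (hbound j)
              cases s
              · simpa [ConeGen.cR, ConeGen.crhs] using neg_le.1 (neg_le_of_neg_le (by linarith [h1.1]))
              · simpa [ConeGen.cR, ConeGen.crhs] using h1.2
          have hGu : ConeGen.GRep A Δ u :=
            ConeGen.grep_of_mem_P hΔ hsub _ u huP rfl
          exact ConeGen.GRep.scale hMpos.le hGu (fun j => by
            rw [hudef]
            simp only []
            rw [← mul_assoc, mul_inv_cancel₀ hMpos.ne', one_mul])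
      obtain ⟨m, θ, z, hθ, hz, hsum⟩ := hGR
      set idx : Fin m → Fin (ConeGen.gens A Δ).card := fun m' => (ConeGen.gens A Δ).equivFin ⟨z m', hz m'⟩ with hidx
      refine ⟨fun i => ∑ m', if idx m' = i then θ m' else 0, ?_, ?_⟩
      · intro i
        apply Finset.sum_nonneg
        intro m' _
        by_cases h : idx m' = i
        · rw [if_pos h]; exact hθ m'
        · rw [if_neg h]
      · intro j
        rw [hsum j]
        have hyidx : ∀ m', (((ConeGen.gens A Δ).equivFin.symm (idx m')).1 : Fin n → ℤ) = z m' := by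
          intro m'
          rw [hidx]
          simp only []
          rw [Equiv.symm_apply_apply]
        calc ∑ m', θ m' * (z m' j : ℝ)
            = ∑ m', ∑ i, if idx m' = i then θ m' * (((ConeGen.gens A Δ).equivFin.symm i).1 j : ℝ) else 0 := by
              apply Finset.sum_congr rfl
              intro m' _
              rw [Finset.sum_ite_eq (Finset.univ) (idx m')
                (fun i => θ m' * (((ConeGen.gens A Δ).equivFin.symm i).1 j : ℝ))]
              rw [if_pos (Finset.mem_univ _), hyidx m']
        _ = ∑ i, ∑ m', if idx m' = i then θ m' * (((ConeGen.gens A Δ).equivFin.symm i).1 j : ℝ) else 0 :=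
              Finset.sum_comm
        _ = ∑ i, (∑ m', if idx m' = i then θ m' else 0) * (((ConeGen.gens A Δ).equivFin.symm i).1 j : ℝ) := by
              apply Finset.sum_congr rfl
              intro i _
              rw [Finset.sum_mul]
              apply Finset.sum_congr rfl
              intro m' _
              rw [ite_mul, zero_mul]
    · -- easy direction
      rintro ⟨lam, hlam0, hlam⟩
      intro r
      have hexp : ((A.map (fun a => (a : ℝ))).mulVec x) r =
          ∑ i, lam i * ((A.mulVec (((ConeGen.gens A Δ).equivFin.symm i).1) r : ℤ) : ℝ) := by
        simp only [Matrix.mulVec, dotProduct, Matrix.map_apply]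
        push_cast
        calc ∑ q, (A r q : ℝ) * x q
            = ∑ q, ∑ i, (A r q : ℝ) * (lam i * (((ConeGen.gens A Δ).equivFin.symm i).1 q : ℝ)) := by
              apply Finset.sum_congr rfl
              intro q _
              rw [hlam q, Finset.mul_sum]
        _ = ∑ i, ∑ q, (A r q : ℝ) * (lam i * (((ConeGen.gens A Δ).equivFin.symm i).1 q : ℝ)) :=
              Finset.sum_comm
        _ = ∑ i, lam i * ∑ q, (A r q : ℝ) * (((ConeGen.gens A Δ).equivFin.symm i).1 q : ℝ) := by
              apply Finset.sum_congr rfl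
              intro i _
              rw [Finset.mul_sum]
              apply Finset.sum_congr rfl
              intros; ring
      have hexp2 : ∀ i, ((A.mulVec (((ConeGen.gens A Δ).equivFin.symm i).1) r : ℤ) : ℝ)
          = ∑ q, (A r q : ℝ) * ((((ConeGen.gens A Δ).equivFin.symm i).1 q : ℤ) : ℝ) := by
        intro i
        simp only [Matrix.mulVec, dotProduct]
        push_cast
        rfl
      have hle : ∑ i, lam i * ((A.mulVec (((ConeGen.gens A Δ).equivFin.symm i).1) r : ℤ) : ℝ) ≤ 0 := by
        apply Finset.sum_nonpos
        intro i _
        apply mul_nonpos_of_nonneg_of_nonpos (hlam0 i)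
        have hmem := ((ConeGen.gens A Δ).equivFin.symm i).2
        simp only [ConeGen.gens, Finset.mem_filter] at hmem
        exact_mod_cast hmem.2 r
      calc ((A.map (fun a => (a : ℝ))).mulVec x) r
          = ∑ i, lam i * ((A.mulVec (((ConeGen.gens A Δ).equivFin.symm i).1) r : ℤ) : ℝ) := by
            rw [hexp]
      _ ≤ 0 := hle
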